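/- Let H be a separable complex Hilbert space, Γ a countable discrete abelian group, π a unitary representation of Γ on H, and δ a unitary operator on H. Let ψ ∈ H and V₀ = closed linear span of {δ^j π(γ) ψ : j < 0, γ ∈ Γ}. Assume V₀ is π-invariant and V₀ ≠ δ(V₀), and assume that for every nonzero f ∈ H the family (π(γ) f)_{γ∈Γ} is linearly independent. Then the affine system (δ^j π(γ) ψ) indexed by (j,γ) ∈ ℤ × Γ is linearly independent. -/

import Mathlib

noncomputable section

/-- The action of a unitary operator on a Hilbert space vector. -/
def uact {H : Type*} [NormedAddCommGroup H] [InnerProductSpace ℂ H] [CompleteSpace H]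
    (u : unitary (H →L[ℂ] H)) (x : H) : H := (u : H →L[ℂ] H) x

section helpers

variable {H : Type*} [NormedAddCommGroup H] [InnerProductSpace ℂ H] [CompleteSpace H]

lemma uact_mul (u v : unitary (H →L[ℂ] H)) (x : H) :
    uact (u * v) x = uact u (uact v x) := rfl

lemma uact_one (x : H) : uact (1 : unitary (H →L[ℂ] H)) x = x := rfl

lemma uact_zpow_zpow (δ : unitary (H →L[ℂ] H)) (a b : ℤ) (x : H) :
    uact (δ ^ a) (uact (δ ^ b) x) = uact (δ ^ (a + b)) x := by
  rw [← uact_mul, ← zpow_add]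

lemma uact_inner (u : unitary (H →L[ℂ] H)) (v g : H) :
    inner ℂ (v : H) (uact u g) = (inner ℂ (uact u⁻¹ v) g : ℂ) := by
  have : ((u⁻¹ : unitary (H →L[ℂ] H)) : H →L[ℂ] H) =
      ContinuousLinearMap.adjoint (u : H →L[ℂ] H) := by
    rw [← ContinuousLinearMap.star_eq_adjoint, ← Unitary.star_eq_inv, Unitary.coe_star]
  show inner ℂ v ((u : H →L[ℂ] H) g) = inner ℂ (((u⁻¹ : unitary (H →L[ℂ] H)) : H →L[ℂ] H) v) g
  rw [this, ContinuousLinearMap.adjoint_inner_left]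

end helpers

theorem stmt3
    {H : Type*} [NormedAddCommGroup H] [InnerProductSpace ℂ H] [CompleteSpace H]
    [TopologicalSpace.SeparableSpace H]
    {Γ : Type*} [CommGroup Γ] [Countable Γ]
    (π : Γ →* unitary (H →L[ℂ] H))
    (δ : unitary (H →L[ℂ] H))
    (ψ : H)
    (V₀ : Submodule ℂ H)
    (hV₀ : V₀ = (Submodule.span ℂ
      {x : H | ∃ j : ℤ, j < 0 ∧ ∃ γ : Γ, x = uact (δ ^ j) (uact (π γ) ψ)}).topologicalClosure)
    (hV₀inv : ∀ γ : Γ, ∀ v ∈ V₀, uact (π γ) v ∈ V₀)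
    (hne : V₀.map ((δ : H →L[ℂ] H) : H →ₗ[ℂ] H) ≠ V₀)
    (hind : ∀ f : H, f ≠ 0 → LinearIndependent ℂ (fun γ : Γ => uact (π γ) f)) :
    LinearIndependent ℂ (fun p : ℤ × Γ => uact (δ ^ p.1) (uact (π p.2) ψ)) := by
  classical
  have hclosed : IsClosed (V₀ : Set H) := by
    rw [hV₀]; exact Submodule.isClosed_topologicalClosure _
  -- the generators lie in V₀
  have hgen : ∀ j : ℤ, j < 0 → ∀ γ : Γ, uact (δ ^ j) (uact (π γ) ψ) ∈ V₀ := by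
    intro j hj γ
    rw [hV₀]
    exact Submodule.le_topologicalClosure _ (Submodule.subset_span ⟨j, hj, γ, rfl⟩)
  -- a minimality principle for V₀
  have hmin : ∀ (N : Submodule ℂ H), IsClosed (N : Set H) →
      (∀ j : ℤ, j < 0 → ∀ γ : Γ, uact (δ ^ j) (uact (π γ) ψ) ∈ N) → V₀ ≤ N := by
    intro N hNc hNg
    rw [hV₀]
    apply Submodule.topologicalClosure_minimal _ _ hNc
    rw [Submodule.span_le]
    rintro x ⟨j, hj, γ, rfl⟩
    exact hNg j hj γ
  -- δ⁻¹ maps V₀ into V₀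
  have hinv : ∀ x ∈ V₀, uact δ⁻¹ x ∈ V₀ := by
    have : V₀ ≤ Submodule.comap (((δ⁻¹ : unitary (H →L[ℂ] H)) : H →L[ℂ] H) : H →ₗ[ℂ] H) V₀ := by
      apply hmin
      · exact hclosed.preimage ((δ⁻¹ : unitary (H →L[ℂ] H)) : H →L[ℂ] H).continuous
      · intro j hj γ
        simp only [Submodule.mem_comap, ContinuousLinearMap.coe_coe]
        have : ((δ⁻¹ : unitary (H →L[ℂ] H)) : H →L[ℂ] H) (uact (δ ^ j) (uact (π γ) ψ))
            = uact (δ ^ (-1 + j)) (uact (π γ) ψ) := by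
          rw [← uact_zpow_zpow δ (-1) j]; rw [zpow_neg_one]; rfl
        rw [this]
        exact hgen _ (by omega) γ
    intro x hx
    exact this hx
  -- Step 1 : ψ ∉ V₀
  have hψ : ψ ∉ V₀ := by
    intro hψV
    apply hne
    apply le_antisymm
    · rw [Submodule.map_le_iff_le_comap]
      apply hmin
      · exact hclosed.preimage ((δ : unitary (H →L[ℂ] H)) : H →L[ℂ] H).continuous
      · intro j hj γ
        simp only [Submodule.mem_comap, ContinuousLinearMap.coe_coe]
        have : ((δ : unitary (H →L[ℂ] H)) : H →L[ℂ] H) (uact (δ ^ j) (uact (π γ) ψ))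
            = uact (δ ^ (1 + j)) (uact (π γ) ψ) := by
          rw [← uact_zpow_zpow δ 1 j, zpow_one]; rfl
        rw [this]
        rcases lt_or_eq_of_le (by omega : 1 + j ≤ 0) with h | h
        · exact hgen _ h γ
        · rw [h, zpow_zero, uact_one]
          exact hV₀inv γ ψ hψV
    · intro x hx
      refine Submodule.mem_map.mpr ⟨uact δ⁻¹ x, hinv x hx, ?_⟩
      show uact δ (uact δ⁻¹ x) = x
      rw [← uact_mul, mul_inv_cancel, uact_one]
  -- Step 2 : no nontrivial combination of the π γ ψ lies in V₀
  haveI : CompleteSpace V₀ := hclosed.completeSpace_coe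
  have key : ∀ (u : Finset Γ) (c : Γ → ℂ),
      (∑ γ ∈ u, c γ • uact (π γ) ψ) ∈ V₀ → ∀ γ ∈ u, c γ = 0 := by
    intro u c hmem
    set p : H := (V₀.orthogonalProjectionOnto ψ : H) with hp_def
    have hp : p ∈ V₀ := (V₀.orthogonalProjectionOnto ψ).2
    set g0 : H := ψ - p with hg0_def
    have hg0 : g0 ∈ V₀ᗮ := Submodule.sub_starProjection_mem_orthogonal ψ
    have hg0ne : g0 ≠ 0 := by
      intro h
      exact hψ (by rw [sub_eq_zero.mp h]; exact hp)
    have hπg0 : ∀ γ : Γ, uact (π γ) g0 ∈ V₀ᗮ := by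
      intro γ
      rw [Submodule.mem_orthogonal]
      intro v hv
      rw [uact_inner]
      have hv' : uact (π γ)⁻¹ v ∈ V₀ := by
        have := hV₀inv γ⁻¹ v hv
        rwa [map_inv] at this
      exact (Submodule.mem_orthogonal _ _).1 hg0 _ hv'
    have h1 : (∑ γ ∈ u, c γ • uact (π γ) g0) ∈ V₀ᗮ :=
      Submodule.sum_mem _ fun γ _ => Submodule.smul_mem _ _ (hπg0 γ)
    have h2 : (∑ γ ∈ u, c γ • uact (π γ) g0) ∈ V₀ := by
      have heq : ∑ γ ∈ u, c γ • uact (π γ) g0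
          = (∑ γ ∈ u, c γ • uact (π γ) ψ) - ∑ γ ∈ u, c γ • uact (π γ) p := by
        rw [← Finset.sum_sub_distrib]
        refine Finset.sum_congr rfl fun γ _ => ?_
        rw [← smul_sub]
        congr 1
        show ((π γ : H →L[ℂ] H)) (ψ - p) = _
        rw [map_sub]; rfl
      rw [heq]
      exact Submodule.sub_mem _ hmem
        (Submodule.sum_mem _ fun γ _ => Submodule.smul_mem _ _ (hV₀inv γ p hp))
    have h0 : (∑ γ ∈ u, c γ • uact (π γ) g0) = 0 :=
      Submodule.disjoint_def.mp (Submodule.orthogonal_disjoint V₀) _ h2 h1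
    exact linearIndependent_iff'.mp (hind g0 hg0ne) u c h0
  -- Step 3 : main argument
  rw [linearIndependent_iff']
  intro s g hsum q hq
  by_contra hgq
  set t := s.filter (fun r => g r ≠ 0) with ht
  have htne : t.Nonempty := ⟨q, Finset.mem_filter.mpr ⟨hq, hgq⟩⟩
  set J := (t.image Prod.fst).max' (htne.image _) with hJ
  obtain ⟨q0, hq0t, hq0J⟩ : ∃ q0 ∈ t, q0.1 = J := by
    have hm := (t.image Prod.fst).max'_mem (htne.image _)
    rw [Finset.mem_image] at hm
    obtain ⟨q0, h, he⟩ := hm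
    exact ⟨q0, h, he⟩
  have hmax : ∀ r ∈ t, r.1 ≤ J := fun r hr =>
    Finset.le_max' _ _ (Finset.mem_image_of_mem _ hr)
  -- apply δ^(-J) to the relation
  have hsum' : ∑ r ∈ s, g r • uact (δ ^ (-J + r.1)) (uact (π r.2) ψ) = 0 := by
    have h := congrArg (fun x => uact (δ ^ (-J)) x) hsum
    rw [show uact (δ ^ (-J)) (0 : H) = 0 from map_zero _] at h
    rw [← h]
    rw [show uact (δ ^ (-J)) (∑ r ∈ s, g r • uact (δ ^ r.1) (uact (π r.2) ψ))
        = ((δ ^ (-J) : unitary (H →L[ℂ] H)) : H →L[ℂ] H)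
          (∑ r ∈ s, g r • uact (δ ^ r.1) (uact (π r.2) ψ)) from rfl]
    rw [map_sum]
    refine Finset.sum_congr rfl fun r _ => ?_
    rw [map_smul]
    congr 1
    exact (uact_zpow_zpow δ (-J) r.1 _).symm
  set s1 := s.filter (fun r => r.1 = J) with hs1
  set s2 := s.filter (fun r => ¬ r.1 = J) with hs2
  have hsplit : (∑ r ∈ s1, g r • uact (δ ^ (-J + r.1)) (uact (π r.2) ψ))
      + (∑ r ∈ s2, g r • uact (δ ^ (-J + r.1)) (uact (π r.2) ψ)) = 0 := by
    rw [Finset.sum_filter_add_sum_filter_not]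
    exact hsum'
  have hs2mem : (∑ r ∈ s2, g r • uact (δ ^ (-J + r.1)) (uact (π r.2) ψ)) ∈ V₀ := by
    refine Submodule.sum_mem _ fun r hr => ?_
    rcases eq_or_ne (g r) 0 with h | h
    · rw [h, zero_smul]; exact Submodule.zero_mem _
    · have hrt : r ∈ t := Finset.mem_filter.mpr ⟨(Finset.mem_filter.mp hr).1, h⟩
      have hrJ : r.1 ≠ J := (Finset.mem_filter.mp hr).2
      have : -J + r.1 < 0 := by
        have := hmax r hrt
        omega
      exact Submodule.smul_mem _ _ (hgen _ this r.2)
  have hs1eq : (∑ r ∈ s1, g r • uact (δ ^ (-J + r.1)) (uact (π r.2) ψ))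
      = ∑ r ∈ s1, g r • uact (π r.2) ψ := by
    refine Finset.sum_congr rfl fun r hr => ?_
    have hrJ : r.1 = J := (Finset.mem_filter.mp hr).2
    rw [hrJ, neg_add_cancel, zpow_zero, uact_one]
  have hs1memV : (∑ r ∈ s1, g r • uact (π r.2) ψ) ∈ V₀ := by
    rw [← hs1eq]
    rw [eq_neg_of_add_eq_zero_left hsplit]
    exact Submodule.neg_mem _ hs2mem
  -- reindex along the second coordinate
  set u := s1.image Prod.snd with hu
  set c : Γ → ℂ := fun γ => g (J, γ) with hc
  have hinj : ∀ x ∈ s1, ∀ y ∈ s1, x.2 = y.2 → x = y := by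
    intro x hx y hy hxy
    have hx1 : x.1 = J := (Finset.mem_filter.mp hx).2
    have hy1 : y.1 = J := (Finset.mem_filter.mp hy).2
    exact Prod.ext (hx1.trans hy1.symm) hxy
  have husum : (∑ γ ∈ u, c γ • uact (π γ) ψ) = ∑ r ∈ s1, g r • uact (π r.2) ψ := by
    rw [hu, Finset.sum_image hinj]
    refine Finset.sum_congr rfl fun r hr => ?_
    have hrJ : r.1 = J := (Finset.mem_filter.mp hr).2
    have : (J, r.2) = r := Prod.ext hrJ.symm rfl
    rw [hc]
    simp only [this]
  have hq0s1 : q0 ∈ s1 :=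
    Finset.mem_filter.mpr ⟨(Finset.mem_filter.mp hq0t).1, hq0J⟩
  have hq0u : q0.2 ∈ u := Finset.mem_image_of_mem _ hq0s1
  have hc0 : c q0.2 = 0 := key u c (by rw [husum]; exact hs1memV) q0.2 hq0u
  have : g q0 ≠ 0 := (Finset.mem_filter.mp hq0t).2
  apply this
  rw [← show (J, q0.2) = q0 from Prod.ext hq0J.symm rfl]
  exact hc0
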